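/- Let (t_k)_{k ≥ 0} be a sequence in a commutative ring and let α ∈ NC(n). Then Σ_{β ∈ NC(n), β ≫ α} (∏_{U β-special block of α} t_{|U|−1}) · (∏_{V block of α that is not β-special} t_{|V|}) = (∏_{U outer block of α} t_{|U|−1}) · (∏_{V inner block of α} (t_{|V|−1} + t_{|V|})). -/
import Mathlib


open scoped Classical

/-- The minimum of a finset of naturals (`0` if empty). -/
noncomputable def fmin (A : Finset ℕ) : ℕ := sInf (A : Set ℕ)

/-- The maximum of a finset of naturals (`0` if empty). -/
noncomputable def fmax (A : Finset ℕ) : ℕ := sSup (A : Set ℕ)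

/-- `α` is a partition of the finite set `F ⊆ ℕ`. -/
def IsPartitionOfSet (F : Finset ℕ) (α : Finset (Finset ℕ)) : Prop :=
  (∀ V ∈ α, V.Nonempty) ∧ (∀ V ∈ α, V ⊆ F) ∧ (∀ m ∈ F, ∃ V ∈ α, m ∈ V) ∧
    ∀ V ∈ α, ∀ W ∈ α, V ≠ W → V ∩ W = ∅

/-- `α` is a partition of `{1,…,n}`. -/
def IsPartitionOf (n : ℕ) (α : Finset (Finset ℕ)) : Prop :=
  IsPartitionOfSet (Finset.Icc 1 n) α

/-- Two distinct blocks of the family `π` cross: there are `a < b < c < d` with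
`a, c` in one block and `b, d` in a different block. -/
def IsCrossing (π : Finset (Finset ℕ)) : Prop :=
  ∃ A ∈ π, ∃ B ∈ π, A ≠ B ∧
    ∃ a ∈ A, ∃ b ∈ B, ∃ c ∈ A, ∃ d ∈ B, a < b ∧ b < c ∧ c < d

/-- `α ∈ NC(n)`: a non-crossing partition of `{1,…,n}`. -/
def IsNCPartition (n : ℕ) (α : Finset (Finset ℕ)) : Prop :=
  IsPartitionOf n α ∧ ¬ IsCrossing α

/-- Reverse refinement order `α ≤ β`: every block of `α` is contained in a block of `β`
(equivalently, every block of `β` is a union of blocks of `α`). -/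
def Refines (α β : Finset (Finset ℕ)) : Prop := ∀ V ∈ α, ∃ W ∈ β, V ⊆ W

/-- The partial order `α ≪ β`: `α ≤ β` and for every block `W` of `β` there is a block
`V` of `α` containing both `min W` and `max W`. -/
def LL (α β : Finset (Finset ℕ)) : Prop :=
  Refines α β ∧ ∀ W ∈ β, ∃ V ∈ α, fmin W ∈ V ∧ fmax W ∈ V

/-- A block `V` (of `α`) is `β`-special: some block `W` of `β` has the same min and max. -/
def SpecialBlock (β : Finset (Finset ℕ)) (V : Finset ℕ) : Prop :=
  ∃ W ∈ β, fmin V = fmin W ∧ fmax V = fmax W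

/-- `V` is an outer block of `α`: no block of `α` strictly nests around it. -/
def OuterBlock (α : Finset (Finset ℕ)) (V : Finset ℕ) : Prop :=
  ∀ V' ∈ α, ¬ (fmin V' < fmin V ∧ fmax V < fmax V')

/-- `π` is a linked partition of the finite set `F ⊆ ℕ`. -/
def IsLinkedPartitionOfSet (F : Finset ℕ) (π : Finset (Finset ℕ)) : Prop :=
  (∀ A ∈ π, A.Nonempty) ∧ (∀ A ∈ π, A ⊆ F) ∧ (∀ m ∈ F, ∃ A ∈ π, m ∈ A) ∧
    ∀ A ∈ π, ∀ B ∈ π, A ≠ B →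
      A ∩ B = ∅ ∨
        (2 ≤ A.card ∧ 2 ≤ B.card ∧ (A ∩ B).card = 1 ∧ fmin A ≠ fmin B ∧
          ∀ x ∈ A ∩ B, x = fmin A ∨ x = fmin B)

/-- `π ∈ NCL(F)`: a non-crossing linked partition of the finite set `F`. -/
def IsNCLOfSet (F : Finset ℕ) (π : Finset (Finset ℕ)) : Prop :=
  IsLinkedPartitionOfSet F π ∧ ¬ IsCrossing π

/-- `π ∈ NCL(n)`: a non-crossing linked partition of `{1,…,n}`. -/
def IsNCL (n : ℕ) (π : Finset (Finset ℕ)) : Prop :=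
  IsNCLOfSet (Finset.Icc 1 n) π

/-- The number of blocks of `π` containing `m`. -/
noncomputable def coverCount (π : Finset (Finset ℕ)) (m : ℕ) : ℕ :=
  (π.filter fun A => m ∈ A).card

/-- `m` is singly-covered by `π`: it lies in exactly one block. -/
def SinglyCovered (π : Finset (Finset ℕ)) (m : ℕ) : Prop := coverCount π m = 1

/-- `m` is doubly-covered by `π`: it lies in exactly two blocks. -/
def DoublyCovered (π : Finset (Finset ℕ)) (m : ℕ) : Prop := coverCount π m = 2

/-- The partition `π̂` generated by the blocks of `π`: its blocks are the connected
components of the ground set under the relation of lying in a common block of `π`. -/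
noncomputable def genPart (π : Finset (Finset ℕ)) : Finset (Finset ℕ) :=
  (π.sup id).image fun m =>
    (π.sup id).filter fun x =>
      Relation.EqvGen (fun a b => ∃ A ∈ π, a ∈ A ∧ b ∈ A) m x

/-- The unlinking `π̌` of a linked partition `π`. -/
noncomputable def unlink (π : Finset (Finset ℕ)) : Finset (Finset ℕ) :=
  π.image fun A => if SinglyCovered π (fmin A) then A else A.erase (fmin A)

/-- The block of `α` containing `m` (empty if there is none). -/
noncomputable def blockOf (α : Finset (Finset ℕ)) (m : ℕ) : Finset ℕ :=
  (α.filter fun V => m ∈ V).sup id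

/-- The successor of `m` in the cycle on the block `V` (elements in increasing order). -/
noncomputable def nextInBlock (V : Finset ℕ) (m : ℕ) : ℕ :=
  if m = fmax V then fmin V else fmin (V.filter fun x => m < x)

/-- The predecessor of `m` in the cycle on the block `V`. -/
noncomputable def prevInBlock (V : Finset ℕ) (m : ℕ) : ℕ :=
  if m = fmin V then fmax V else fmax (V.filter fun x => x < m)

/-- The permutation `P_α` associated to a partition `α`, as a function: each block
`{i₁ < i₂ < ⋯ < iₘ}` becomes the cycle `i₁ ↦ i₂ ↦ ⋯ ↦ iₘ ↦ i₁`. -/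
noncomputable def permOf (α : Finset (Finset ℕ)) (m : ℕ) : ℕ :=
  if m ∈ blockOf α m then nextInBlock (blockOf α m) m else m

/-- The inverse permutation `P_α⁻¹`, as a function. -/
noncomputable def permOfInv (α : Finset (Finset ℕ)) (m : ℕ) : ℕ :=
  if m ∈ blockOf α m then prevInBlock (blockOf α m) m else m

/-- The action `τ·α` of a map `τ` on a partition `α = {V₁,…,V_p}`, giving
`{τ(V₁),…,τ(V_p)}`. -/
def mapPart (τ : ℕ → ℕ) (α : Finset (Finset ℕ)) : Finset (Finset ℕ) :=
  α.image fun V => V.image τ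

/-- The cycled unlinking `π° := P_{π̂}⁻¹ · π̌`. -/
noncomputable def cycUnlink (π : Finset (Finset ℕ)) : Finset (Finset ℕ) :=
  mapPart (permOfInv (genPart π)) (unlink π)

/-- `NC(n)` as a finset. -/
noncomputable def NCF (n : ℕ) : Finset (Finset (Finset ℕ)) :=
  ((Finset.Icc 1 n).powerset.powerset).filter (IsNCPartition n)

/-- `NCL(n)` as a finset. -/
noncomputable def NCLF (n : ℕ) : Finset (Finset (Finset ℕ)) :=
  ((Finset.Icc 1 n).powerset.powerset).filter (IsNCL n)

/-- The restriction `π|_E`: the blocks of `π` contained in `E`. -/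
def restrictL (π : Finset (Finset ℕ)) (E : Finset ℕ) : Finset (Finset ℕ) :=
  π.filter fun A => A ⊆ E

/-- The partition `β₀` obtained from `β` by leaving blocks of size `≤ 2` intact and
breaking each block `W` with `|W| ≥ 3` into the doubleton `{min W, max W}` together
with `|W| - 2` singletons. -/
noncomputable def breakBlocks (β : Finset (Finset ℕ)) : Finset (Finset ℕ) :=
  β.biUnion fun W =>
    if W.card ≤ 2 then {W}
    else insert {fmin W, fmax W} ((W \ {fmin W, fmax W}).image fun x => ({x} : Finset ℕ))

lemma fmin_mem {A : Finset ℕ} (h : A.Nonempty) : fmin A ∈ A := by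
  have h1 : (A : Set ℕ).Nonempty := by exact_mod_cast h
  exact_mod_cast Nat.sInf_mem h1
lemma fmin_le {A : Finset ℕ} {a : ℕ} (h : a ∈ A) : fmin A ≤ a :=
  Nat.sInf_le (by exact_mod_cast h)
lemma fmax_mem {A : Finset ℕ} (h : A.Nonempty) : fmax A ∈ A := by
  have h1 : (A : Set ℕ).Nonempty := by exact_mod_cast h
  exact_mod_cast Nat.sSup_mem h1 A.finite_toSet.bddAbove
lemma le_fmax {A : Finset ℕ} {a : ℕ} (h : a ∈ A) : a ≤ fmax A :=
  le_csSup A.finite_toSet.bddAbove (by exact_mod_cast h)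
lemma fmin_le_fmax {A : Finset ℕ} (h : A.Nonempty) : fmin A ≤ fmax A :=
  le_fmax (fmin_mem h)

section Part
variable {n : ℕ} {α : Finset (Finset ℕ)}

lemma blocks_eq (hα : IsPartitionOf n α) {V W : Finset ℕ} (hV : V ∈ α) (hW : W ∈ α)
    {x : ℕ} (hxV : x ∈ V) (hxW : x ∈ W) : V = W := by
  by_contra h
  have h2 := hα.2.2.2 V hV W hW h
  have h3 : x ∈ V ∩ W := Finset.mem_inter.2 ⟨hxV, hxW⟩
  rw [h2] at h3
  exact absurd h3 (Finset.notMem_empty x)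

lemma cross_elim {π : Finset (Finset ℕ)} (hnc : ¬ IsCrossing π) {A B : Finset ℕ} {a b c d : ℕ}
    (hA : A ∈ π) (hB : B ∈ π) (hAB : A ≠ B) (ha : a ∈ A) (hb : b ∈ B) (hc : c ∈ A) (hd : d ∈ B)
    (h1 : a < b) (h2 : b < c) (h3 : c < d) : False :=
  hnc ⟨A, hA, B, hB, hAB, a, ha, b, hb, c, hc, d, hd, h1, h2, h3⟩

lemma eq_of_fmin_eq (hα : IsPartitionOf n α) {V W : Finset ℕ} (hV : V ∈ α) (hW : W ∈ α)
    (h : fmin V = fmin W) : V = W :=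
  blocks_eq hα hV hW (fmin_mem (hα.1 V hV)) (h ▸ fmin_mem (hα.1 W hW))

lemma eq_of_fmax_eq (hα : IsPartitionOf n α) {V W : Finset ℕ} (hV : V ∈ α) (hW : W ∈ α)
    (h : fmax V = fmax W) : V = W :=
  blocks_eq hα hV hW (fmax_mem (hα.1 V hV)) (h ▸ fmax_mem (hα.1 W hW))

/-- If `m ∈ V` and `W ≠ V` spans `m`, then `W` strictly nests around `V`. -/
lemma nests_of_spans (hα : IsNCPartition n α) {V W : Finset ℕ} {m : ℕ}
    (hV : V ∈ α) (hW : W ∈ α) (hVW : V ≠ W) (hm : m ∈ V)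
    (h1 : fmin W ≤ m) (h2 : m ≤ fmax W) : fmin W < fmin V ∧ fmax V < fmax W := by
  obtain ⟨hp, hnc⟩ := hα
  have hWne : W.Nonempty := hp.1 W hW
  have hVne : V.Nonempty := hp.1 V hV
  have hmW : m ∉ W := fun h => hVW (blocks_eq hp hV hW hm h)
  have h1' : fmin W < m := lt_of_le_of_ne h1 (fun h => hmW (h ▸ fmin_mem hWne))
  have h2' : m < fmax W := lt_of_le_of_ne h2 (fun h => hmW (h.symm ▸ fmax_mem hWne))
  constructor
  · rcases lt_trichotomy (fmin W) (fmin V) with h | h | h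
    · exact h
    · exact absurd (eq_of_fmin_eq hp hW hV h) (Ne.symm hVW)
    · exact absurd (cross_elim hnc hV hW hVW (fmin_mem hVne) (fmin_mem hWne) hm
        (fmax_mem hWne) h h1' h2') not_false
  · rcases lt_trichotomy (fmax V) (fmax W) with h | h | h
    · exact h
    · exact absurd (eq_of_fmax_eq hp hV hW h) hVW
    · exact absurd (cross_elim hnc hW hV (Ne.symm hVW) (fmin_mem hWne) hm
        (fmax_mem hWne) (fmax_mem hVne) h1' h2' h) not_false

lemma mem_Icc_of_spans (hα : IsPartitionOf n α) {A : Finset ℕ} (hA : A ∈ α) {m : ℕ}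
    (h1 : fmin A ≤ m) (h2 : m ≤ fmax A) : m ∈ Finset.Icc 1 n := by
  have hne : A.Nonempty := hα.1 A hA
  have hmin := hα.2.1 A hA (fmin_mem hne)
  have hmax := hα.2.1 A hA (fmax_mem hne)
  rw [Finset.mem_Icc] at *
  exact ⟨le_trans hmin.1 h1, le_trans h2 hmax.2⟩

end Part

/-- The innermost-spanning-block fiber: elements of `{1..n}` for which `A` is the
innermost block of `S'` whose span contains them. -/
noncomputable def fiber (n : ℕ) (S' : Finset (Finset ℕ)) (A : Finset ℕ) : Finset ℕ :=
  (Finset.Icc 1 n).filter fun m =>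
    (fmin A ≤ m ∧ m ≤ fmax A) ∧ ∀ B ∈ S', fmin B ≤ m → m ≤ fmax B → fmin B ≤ fmin A

noncomputable def mkB (n : ℕ) (S' : Finset (Finset ℕ)) : Finset (Finset ℕ) :=
  S'.image (fiber n S')

section Constr
variable {n : ℕ} {α S' : Finset (Finset ℕ)}

lemma subset_fiber_self (hα : IsNCPartition n α) (hS : S' ⊆ α) {A : Finset ℕ}
    (hA : A ∈ S') : A ⊆ fiber n S' A := by
  intro m hm
  refine Finset.mem_filter.2 ⟨hα.1.2.1 A (hS hA) hm, ⟨fmin_le hm, le_fmax hm⟩, ?_⟩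
  intro B hB h1 h2
  by_cases hBA : B = A
  · exact le_of_eq (by rw [hBA])
  · exact (nests_of_spans hα (hS hA) (hS hB) (fun h => hBA h.symm) hm h1 h2).1.le

lemma fiber_unique (hα : IsPartitionOf n α) (hS : S' ⊆ α) {A B : Finset ℕ}
    (hA : A ∈ S') (hB : B ∈ S') {m : ℕ}
    (hmA : m ∈ fiber n S' A) (hmB : m ∈ fiber n S' B) : A = B := by
  obtain ⟨-, hsA, hinA⟩ := Finset.mem_filter.1 hmA
  obtain ⟨-, hsB, hinB⟩ := Finset.mem_filter.1 hmB
  exact eq_of_fmin_eq hα (hS hA) (hS hB)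
    (le_antisymm (hinB A hA hsA.1 hsA.2) (hinA B hB hsB.1 hsB.2))

lemma fmin_fiber (hα : IsNCPartition n α) (hS : S' ⊆ α) {A : Finset ℕ} (hA : A ∈ S') :
    fmin (fiber n S' A) = fmin A ∧ fmax (fiber n S' A) = fmax A := by
  have hne : A.Nonempty := hα.1.1 A (hS hA)
  have hsub := subset_fiber_self hα hS hA
  have hfne : (fiber n S' A).Nonempty := hne.mono hsub
  constructor
  · refine le_antisymm (fmin_le (hsub (fmin_mem hne))) ?_
    exact (Finset.mem_filter.1 (fmin_mem hfne)).2.1.1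
  · refine le_antisymm ?_ (le_fmax (hsub (fmax_mem hne)))
    exact (Finset.mem_filter.1 (fmax_mem hfne)).2.1.2

lemma exists_outer_span (hα : IsNCPartition n α) {m : ℕ} (hm : m ∈ Finset.Icc 1 n) :
    ∃ A ∈ α, OuterBlock α A ∧ fmin A ≤ m ∧ m ≤ fmax A := by
  obtain ⟨V, hV, hmV⟩ := hα.1.2.2.1 m hm
  set F := α.filter (fun B => fmin B ≤ m ∧ m ≤ fmax B) with hF
  have hFne : F.Nonempty := ⟨V, Finset.mem_filter.2 ⟨hV, fmin_le hmV, le_fmax hmV⟩⟩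
  obtain ⟨B0, hB0, hmin⟩ := F.exists_min_image fmin hFne
  obtain ⟨hB0α, hsp⟩ := Finset.mem_filter.1 hB0
  refine ⟨B0, hB0α, ?_, hsp⟩
  rintro V' hV' ⟨h1, h2⟩
  have hV'F : V' ∈ F := Finset.mem_filter.2 ⟨hV', le_trans h1.le hsp.1, le_trans hsp.2 h2.le⟩
  exact absurd (hmin V' hV'F) (not_le.2 h1)

lemma exists_fiber (hα : IsNCPartition n α) (hS : S' ⊆ α)
    (hout : ∀ V ∈ α, OuterBlock α V → V ∈ S') {m : ℕ} (hm : m ∈ Finset.Icc 1 n) :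
    ∃ A ∈ S', m ∈ fiber n S' A := by
  set F := S'.filter (fun B => fmin B ≤ m ∧ m ≤ fmax B) with hF
  have hFne : F.Nonempty := by
    obtain ⟨A0, hA0, hA0o, hsp⟩ := exists_outer_span hα hm
    exact ⟨A0, Finset.mem_filter.2 ⟨hout A0 hA0 hA0o, hsp⟩⟩
  obtain ⟨A, hA, hmax⟩ := F.exists_max_image fmin hFne
  obtain ⟨hAS, hsp⟩ := Finset.mem_filter.1 hA
  refine ⟨A, hAS, Finset.mem_filter.2 ⟨hm, hsp, ?_⟩⟩
  intro B hB h1 h2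
  exact hmax B (Finset.mem_filter.2 ⟨hB, h1, h2⟩)

lemma mkB_partition (hα : IsNCPartition n α) (hS : S' ⊆ α)
    (hout : ∀ V ∈ α, OuterBlock α V → V ∈ S') : IsPartitionOf n (mkB n S') := by
  refine ⟨?_, ?_, ?_, ?_⟩
  · rintro W hW
    obtain ⟨A, hA, rfl⟩ := Finset.mem_image.1 hW
    exact (hα.1.1 A (hS hA)).mono (subset_fiber_self hα hS hA)
  · rintro W hW
    obtain ⟨A, hA, rfl⟩ := Finset.mem_image.1 hW
    exact Finset.filter_subset _ _
  · intro m hm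
    obtain ⟨A, hA, hmA⟩ := exists_fiber hα hS hout hm
    exact ⟨fiber n S' A, Finset.mem_image_of_mem _ hA, hmA⟩
  · rintro W hW W' hW' hne
    obtain ⟨A, hA, rfl⟩ := Finset.mem_image.1 hW
    obtain ⟨B, hB, rfl⟩ := Finset.mem_image.1 hW'
    rw [Finset.eq_empty_iff_forall_notMem]
    intro x hx
    rw [Finset.mem_inter] at hx
    exact hne (by rw [fiber_unique hα.1 hS hA hB hx.1 hx.2])

lemma mkB_noncross (hα : IsNCPartition n α) (hS : S' ⊆ α) : ¬ IsCrossing (mkB n S') := by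
  rintro ⟨W, hW, W', hW', hne, a, ha, b, hb, c, hc, d, hd, h1, h2, h3⟩
  obtain ⟨A, hA, rfl⟩ := Finset.mem_image.1 hW
  obtain ⟨B, hB, rfl⟩ := Finset.mem_image.1 hW'
  have hAB : A ≠ B := fun h => hne (by rw [h])
  obtain ⟨-, hsa, -⟩ := Finset.mem_filter.1 ha
  obtain ⟨-, hsb, hinb⟩ := Finset.mem_filter.1 hb
  obtain ⟨-, hsc, hinc⟩ := Finset.mem_filter.1 hc
  obtain ⟨-, hsd, -⟩ := Finset.mem_filter.1 hd
  have e1 : fmin A ≤ fmin B :=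
    hinb A hA (le_trans hsa.1 (le_of_lt h1)) (le_trans (le_of_lt h2) hsc.2)
  have e2 : fmin B ≤ fmin A :=
    hinc B hB (le_trans hsb.1 (le_of_lt h2)) (le_trans (le_of_lt h3) hsd.2)
  exact hAB (eq_of_fmin_eq hα.1 (hS hA) (hS hB) (le_antisymm e1 e2))

end Constr

section Constr2
variable {n : ℕ} {α S' : Finset (Finset ℕ)}

lemma mkB_LL (hα : IsNCPartition n α) (hS : S' ⊆ α)
    (hout : ∀ V ∈ α, OuterBlock α V → V ∈ S') : LL α (mkB n S') := by
  constructor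
  · intro V hV
    have hVne : V.Nonempty := hα.1.1 V hV
    have hminIcc : fmin V ∈ Finset.Icc 1 n := hα.1.2.1 V hV (fmin_mem hVne)
    obtain ⟨A, hA, hmA⟩ := exists_fiber hα hS hout hminIcc
    refine ⟨fiber n S' A, Finset.mem_image_of_mem _ hA, ?_⟩
    by_cases hVS : V ∈ S'
    · have hVA : V = A := fiber_unique hα.1 hS hVS hA
        (subset_fiber_self hα hS hVS (fmin_mem hVne)) hmA
      rw [← hVA]
      exact subset_fiber_self hα hS hVS
    · have hAV : V ≠ A := fun h => hVS (h ▸ hA)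
      obtain ⟨-, hsA, hinA⟩ := Finset.mem_filter.1 hmA
      have hnest := nests_of_spans hα hV (hS hA) hAV (fmin_mem hVne) hsA.1 hsA.2
      intro m hm
      have hm1 : fmin V ≤ m := fmin_le hm
      have hm2 : m ≤ fmax V := le_fmax hm
      refine Finset.mem_filter.2 ⟨mem_Icc_of_spans hα.1 (hS hA)
        (le_trans hnest.1.le hm1) (le_trans hm2 hnest.2.le),
        ⟨le_trans hnest.1.le hm1, le_trans hm2 hnest.2.le⟩, ?_⟩
      intro B hB hb1 hb2
      have hVB : V ≠ B := fun h => hVS (h ▸ hB)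
      have hnB := nests_of_spans hα hV (hS hB) hVB hm hb1 hb2
      exact hinA B hB hnB.1.le (le_trans (fmin_le_fmax hVne) hnB.2.le)
  · rintro W hW
    obtain ⟨A, hA, rfl⟩ := Finset.mem_image.1 hW
    obtain ⟨e1, e2⟩ := fmin_fiber hα hS hA
    exact ⟨A, hS hA, e1 ▸ fmin_mem (hα.1.1 A (hS hA)), e2 ▸ fmax_mem (hα.1.1 A (hS hA))⟩

lemma special_mkB (hα : IsNCPartition n α) (hS : S' ⊆ α) {V : Finset ℕ} (hV : V ∈ α) :
    SpecialBlock (mkB n S') V ↔ V ∈ S' := by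
  constructor
  · rintro ⟨W, hW, hmin, hmax⟩
    obtain ⟨A, hA, rfl⟩ := Finset.mem_image.1 hW
    have h : fmin V = fmin A := hmin.trans (fmin_fiber hα hS hA).1
    exact (eq_of_fmin_eq hα.1 hV (hS hA) h) ▸ hA
  · intro h
    exact ⟨fiber n S' V, Finset.mem_image_of_mem _ h,
      (fmin_fiber hα hS h).1.symm, (fmin_fiber hα hS h).2.symm⟩

end Constr2

section Inverse
variable {n : ℕ} {α β : Finset (Finset ℕ)}

/-- Every outer block of `α` is `β`-special when `α ≪ β`. -/
lemma outer_special (hα : IsNCPartition n α) (hβ : IsNCPartition n β) (hLL : LL α β)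
    {U : Finset ℕ} (hU : U ∈ α) (hOut : OuterBlock α U) : SpecialBlock β U := by
  have hUne : U.Nonempty := hα.1.1 U hU
  obtain ⟨W, hW, hUW⟩ := hLL.1 U hU
  obtain ⟨V, hV, hminV, hmaxV⟩ := hLL.2 W hW
  have hWne : W.Nonempty := hβ.1.1 W hW
  have h1 : fmin W ≤ fmin U := fmin_le (hUW (fmin_mem hUne))
  have h2 : fmax U ≤ fmax W := le_fmax (hUW (fmax_mem hUne))
  by_cases hVU : V = U
  · subst hVU
    exact ⟨W, hW, le_antisymm (fmin_le hminV) h1, le_antisymm h2 (le_fmax hmaxV)⟩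
  · exfalso
    apply hOut V hV
    constructor
    · exact lt_of_le_of_ne (le_trans (fmin_le hminV) h1)
        (fun h => hVU (eq_of_fmin_eq hα.1 hV hU h))
    · exact lt_of_le_of_ne (le_trans h2 (le_fmax hmaxV))
        (fun h => hVU (eq_of_fmax_eq hα.1 hV hU h.symm))

/-- Every block of `β` equals the fiber of its special `α`-block. -/
lemma block_eq_fiber (hα : IsNCPartition n α) (hβ : IsNCPartition n β) (hLL : LL α β)
    {W : Finset ℕ} (hW : W ∈ β) :
    ∃ V ∈ α.filter (SpecialBlock β), fmin V = fmin W ∧ fmax V = fmax W ∧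
      W ⊆ fiber n (α.filter (SpecialBlock β)) V := by
  obtain ⟨V, hV, hmV, hxV⟩ := hLL.2 W hW
  have hWne : W.Nonempty := hβ.1.1 W hW
  obtain ⟨W', hW', hVW'⟩ := hLL.1 V hV
  have hW'W : W' = W := blocks_eq hβ.1 hW' hW (hVW' hmV) (fmin_mem hWne)
  rw [hW'W] at hVW'
  have e1 : fmin V = fmin W := le_antisymm (fmin_le hmV) (fmin_le (hVW' (fmin_mem (hα.1.1 V hV))))
  have e2 : fmax V = fmax W := le_antisymm (le_fmax (hVW' (fmax_mem (hα.1.1 V hV)))) (le_fmax hxV)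
  have hVsp : SpecialBlock β V := ⟨W, hW, e1, e2⟩
  refine ⟨V, Finset.mem_filter.2 ⟨hV, hVsp⟩, e1, e2, ?_⟩
  intro m hm
  have hmIcc : m ∈ Finset.Icc 1 n := hβ.1.2.1 W hW hm
  refine Finset.mem_filter.2 ⟨hmIcc, ⟨e1 ▸ fmin_le hm, e2 ▸ le_fmax hm⟩, ?_⟩
  intro B hB hb1 hb2
  obtain ⟨hBα, W'', hW'', eb1, eb2⟩ := Finset.mem_filter.1 hB
  by_contra hlt
  push_neg at hlt
  rw [e1] at hlt
  by_cases hWW : W'' = W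
  · rw [hWW] at eb1
    rw [eb1] at hlt
    exact lt_irrefl _ hlt
  · have hminW'' : fmin W'' ∈ W'' := fmin_mem (hβ.1.1 _ hW'')
    have hmaxW'' : fmax W'' ∈ W'' := fmax_mem (hβ.1.1 _ hW'')
    have hb1' : fmin W'' < m := by
      rcases lt_or_eq_of_le hb1 with h | h
      · rw [← eb1]; exact h
      · exfalso
        apply hWW
        have hmem : m ∈ W'' := by rw [← eb1, h] at hminW''; exact hminW''
        exact blocks_eq hβ.1 hW'' hW hmem hm
    have hb2' : m < fmax W'' := by
      rcases lt_or_eq_of_le hb2 with h | h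
      · rw [← eb2]; exact h
      · exfalso
        apply hWW
        have hmem : m ∈ W'' := by rw [← eb2, ← h] at hmaxW''; exact hmaxW''
        exact blocks_eq hβ.1 hW'' hW hmem hm
    have hab : fmin W < fmin W'' := by rw [← eb1]; exact hlt
    exact cross_elim hβ.2 hW hW'' (fun h => hWW h.symm) (fmin_mem hWne)
      hminW'' hm hmaxW'' hab hb1' hb2'

lemma beta_eq_mkB (hα : IsNCPartition n α) (hβ : IsNCPartition n β) (hLL : LL α β) :
    β = mkB n (α.filter (SpecialBlock β)) := by
  set Sb := α.filter (SpecialBlock β) with hSb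
  have hS : Sb ⊆ α := Finset.filter_subset _ _
  -- full equality of each block with its fiber
  have key : ∀ W ∈ β, ∀ V ∈ Sb, fmin V = fmin W → fmax V = fmax W → W = fiber n Sb V := by
    intro W hW V hVSb e1 e2
    obtain ⟨V0, hV0, e10, e20, hsub0⟩ := block_eq_fiber hα hβ hLL hW
    have hVV0 : V = V0 := eq_of_fmin_eq hα.1 (hS hVSb) (hS hV0) (by rw [e1, e10])
    subst hVV0
    refine le_antisymm hsub0 ?_
    intro m hm
    have hmIcc : m ∈ Finset.Icc 1 n := (Finset.mem_filter.1 hm).1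
    obtain ⟨W2, hW2, hmW2⟩ := hβ.1.2.2.1 m hmIcc
    obtain ⟨V2, hV2, e12, e22, hsub2⟩ := block_eq_fiber hα hβ hLL hW2
    have hV2V : V2 = V := fiber_unique hα.1 hS hV2 hVSb (hsub2 hmW2) hm
    have hfW : fmin W2 = fmin W := by rw [← e12, hV2V, e1]
    have : W2 = W := by
      refine blocks_eq hβ.1 hW2 hW ?_ (fmin_mem (hβ.1.1 W hW))
      rw [← hfW]
      exact fmin_mem (hβ.1.1 W2 hW2)
    exact this ▸ hmW2
  apply Finset.Subset.antisymm
  · intro W hW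
    obtain ⟨V, hV, e1, e2, -⟩ := block_eq_fiber hα hβ hLL hW
    rw [key W hW V hV e1 e2]
    exact Finset.mem_image_of_mem _ hV
  · intro W hW
    obtain ⟨V, hVSb, rfl⟩ := Finset.mem_image.1 hW
    obtain ⟨hVα, W', hW', e1, e2⟩ := Finset.mem_filter.1 hVSb
    rw [← key W' hW' V hVSb e1 e2]
    exact hW'

end Inverse


/-- Let `(t_k)` be a sequence in a commutative ring and `α ∈ NC(n)`.
Then `Σ_{β ∈ NC(n), β ≫ α}
        (∏_{U β-special block of α} t_{|U|-1}) · (∏_{V non-β-special block of α} t_{|V|})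
  = (∏_{U outer block of α} t_{|U|-1}) · (∏_{V inner block of α} (t_{|V|-1} + t_{|V|}))`. -/
theorem stmt18 {R : Type*} [CommRing R] (t : ℕ → R)
    (n : ℕ) (α : Finset (Finset ℕ)) (hα : IsNCPartition n α) :
    ∑ β ∈ (NCF n).filter fun β => LL α β,
        (∏ U ∈ α.filter fun U => SpecialBlock β U, t (U.card - 1))
          * ∏ V ∈ α.filter fun V => ¬ SpecialBlock β V, t V.card
      = (∏ U ∈ α.filter fun U => OuterBlock α U, t (U.card - 1))
          * ∏ V ∈ α.filter fun V => ¬ OuterBlock α V, (t (V.card - 1) + t V.card) := by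
  set O := α.filter fun U => OuterBlock α U with hO
  set I := α.filter fun V => ¬ OuterBlock α V with hI
  set T' := (α.powerset).filter (fun S' => O ⊆ S') with hT'
  have hmemT' : ∀ S' ∈ T', S' ⊆ α ∧ ∀ V ∈ α, OuterBlock α V → V ∈ S' := by
    intro S' hS'
    obtain ⟨h1, h2⟩ := Finset.mem_filter.1 hS'
    exact ⟨Finset.mem_powerset.1 h1, fun V hV ho => h2 (Finset.mem_filter.2 ⟨hV, ho⟩)⟩
  have hmemD : ∀ β ∈ (NCF n).filter fun β => LL α β, IsNCPartition n β ∧ LL α β := by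
    intro β hβ
    obtain ⟨h1, h2⟩ := Finset.mem_filter.1 hβ
    exact ⟨(Finset.mem_filter.1 h1).2, h2⟩
  have hstep1 : ∑ β ∈ (NCF n).filter fun β => LL α β,
        (∏ U ∈ α.filter fun U => SpecialBlock β U, t (U.card - 1))
          * ∏ V ∈ α.filter fun V => ¬ SpecialBlock β V, t V.card
      = ∑ S' ∈ T', (∏ U ∈ S', t (U.card - 1)) * ∏ V ∈ α \ S', t V.card := by
    refine Finset.sum_nbij' (fun β => α.filter (SpecialBlock β)) (fun S' => mkB n S')
      ?_ ?_ ?_ ?_ ?_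
    · intro β hβ
      obtain ⟨hβNC, hLL⟩ := hmemD β hβ
      refine Finset.mem_filter.2 ⟨Finset.mem_powerset.2 (Finset.filter_subset _ _), ?_⟩
      intro V hVO
      obtain ⟨hVα, ho⟩ := Finset.mem_filter.1 hVO
      exact Finset.mem_filter.2 ⟨hVα, outer_special hα hβNC hLL hVα ho⟩
    · intro S' hS'
      obtain ⟨hsub, hout⟩ := hmemT' S' hS'
      refine Finset.mem_filter.2 ⟨Finset.mem_filter.2 ⟨?_, mkB_partition hα hsub hout,
        mkB_noncross hα hsub⟩, mkB_LL hα hsub hout⟩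
      refine Finset.mem_powerset.2 ?_
      intro W hW
      obtain ⟨A, hA, rfl⟩ := Finset.mem_image.1 hW
      exact Finset.mem_powerset.2 (Finset.filter_subset _ _)
    · intro β hβ
      obtain ⟨hβNC, hLL⟩ := hmemD β hβ
      exact (beta_eq_mkB hα hβNC hLL).symm
    · intro S' hS'
      obtain ⟨hsub, hout⟩ := hmemT' S' hS'
      ext V
      constructor
      · intro hV
        obtain ⟨hVα, hsp⟩ := Finset.mem_filter.1 hV
        exact (special_mkB hα hsub hVα).1 hsp
      · intro hV
        exact Finset.mem_filter.2 ⟨hsub hV, (special_mkB hα hsub (hsub hV)).2 hV⟩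
    · intro β hβ
      rw [Finset.filter_not]
  have hdisjOI : Disjoint O I := Finset.disjoint_filter_filter_not α α _
  have hstep2 : (∏ U ∈ O, t (U.card - 1)) * ∏ V ∈ I, (t (V.card - 1) + t V.card)
      = ∑ S' ∈ T', (∏ U ∈ S', t (U.card - 1)) * ∏ V ∈ α \ S', t V.card := by
    rw [Finset.prod_add, Finset.mul_sum]
    refine Finset.sum_nbij' (fun S => O ∪ S) (fun S' => S' \ O) ?_ ?_ ?_ ?_ ?_
    · intro S hS
      have hSI : S ⊆ I := Finset.mem_powerset.1 hS
      refine Finset.mem_filter.2 ⟨Finset.mem_powerset.2 ?_, ?_⟩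
      · exact Finset.union_subset (Finset.filter_subset _ _)
          (hSI.trans (Finset.filter_subset _ _))
      · exact Finset.subset_union_left
    · intro S' hS'
      obtain ⟨hsub, hout⟩ := hmemT' S' hS'
      refine Finset.mem_powerset.2 ?_
      intro x hx
      obtain ⟨hx1, hx2⟩ := Finset.mem_sdiff.1 hx
      refine Finset.mem_filter.2 ⟨hsub hx1, ?_⟩
      intro ho
      exact hx2 (Finset.mem_filter.2 ⟨hsub hx1, ho⟩)
    · intro S hS
      have hSI : S ⊆ I := Finset.mem_powerset.1 hS
      exact Finset.union_sdiff_cancel_left (hdisjOI.mono_right hSI)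
    · intro S' hS'
      exact Finset.union_sdiff_of_subset (Finset.mem_filter.1 hS').2
    · intro S hS
      have hSI : S ⊆ I := Finset.mem_powerset.1 hS
      have hd : Disjoint O S := hdisjOI.mono_right hSI
      rw [Finset.prod_union hd]
      have hset : α \ (O ∪ S) = I \ S := by
        ext x
        simp only [Finset.mem_sdiff, Finset.mem_union, hI, Finset.mem_filter, hO]
        by_cases hxα : x ∈ α <;> by_cases hxo : OuterBlock α x <;> simp [hxα, hxo] <;> tauto
      rw [hset]
      ring
  rw [hstep1, ← hstep2]
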